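/- Let U and V be unitary operators on a complex Hilbert space H, let m > 0 be a real number, and let X be a bounded operator such that X − mI is positive. Then m‖U − V‖ ≤ w(S) ≤ ‖UX − XV‖, where S is the operator on H ⊕ H given by the 2×2 operator matrix with zero diagonal entries, (1,2)-entry UX − XV, and (2,1)-entry U*X − XV*, and w denotes the numerical radius. -/

import Mathlib

/-- The numerical radius of a bounded linear operator. -/
noncomputable def numRadius {E : Type*} [NormedAddCommGroup E] [InnerProductSpace ℂ E]
    (T : E →L[ℂ] E) : ℝ :=
  ⨆ x : {x : E // ‖x‖ = 1}, ‖(inner ℂ (T x.val) x.val : ℂ)‖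

/-- The 2×2 operator matrix `[[0, C],[D, 0]]` acting on `H ⊕ H` (as `WithLp 2 (H × H)`)
by `(x, y) ↦ (C y, D x)`. -/
noncomputable def offDiagOp {H : Type*} [NormedAddCommGroup H] [InnerProductSpace ℂ H]
    (C D : H →L[ℂ] H) : WithLp 2 (H × H) →L[ℂ] WithLp 2 (H × H) :=
  ((WithLp.prodContinuousLinearEquiv 2 ℂ H H).symm : (H × H) →L[ℂ] WithLp 2 (H × H)) ∘L
    ((C ∘L ContinuousLinearMap.snd ℂ H H).prod (D ∘L ContinuousLinearMap.fst ℂ H H)) ∘L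
    ((WithLp.prodContinuousLinearEquiv 2 ℂ H H) : WithLp 2 (H × H) →L[ℂ] (H × H))

section helperlemmas

open ContinuousLinearMap

local notation "⟪" x ", " y "⟫" => @inner ℂ _ _ x y

section generalE
variable {E : Type*} [NormedAddCommGroup E] [InnerProductSpace ℂ E]
lemma numRadius_nonneg (T : E →L[ℂ] E) : 0 ≤ numRadius T :=
  Real.iSup_nonneg fun _ => norm_nonneg _

lemma numRadius_bdd (T : E →L[ℂ] E) :
    BddAbove (Set.range fun x : {x : E // ‖x‖ = 1} => ‖(inner ℂ (T x.val) x.val : ℂ)‖) := by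
  refine ⟨‖T‖, ?_⟩
  rintro r ⟨x, rfl⟩
  calc ‖(inner ℂ (T x.val) x.val : ℂ)‖ ≤ ‖T x.val‖ * ‖x.val‖ := norm_inner_le_norm _ _
    _ ≤ (‖T‖ * ‖x.val‖) * ‖x.val‖ := by
        gcongr; exact T.le_opNorm _
    _ = ‖T‖ := by rw [x.2]; ring

lemma le_numRadius (T : E →L[ℂ] E) {x : E} (hx : ‖x‖ = 1) :
    ‖(inner ℂ (T x) x : ℂ)‖ ≤ numRadius T :=
  le_ciSup (numRadius_bdd T) ⟨x, hx⟩

lemma numRadius_le (T : E →L[ℂ] E) {M : ℝ} (hM : 0 ≤ M)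
    (h : ∀ x : E, ‖x‖ = 1 → ‖(inner ℂ (T x) x : ℂ)‖ ≤ M) : numRadius T ≤ M :=
  Real.iSup_le (fun x => h x.1 x.2) hM



end generalE

section anyH
variable {H : Type*} [NormedAddCommGroup H] [InnerProductSpace ℂ H]


lemma offDiagOp_apply (C D : H →L[ℂ] H) (z : WithLp 2 (H × H)) :
    offDiagOp C D z = (WithLp.equiv 2 (H × H)).symm (C z.snd, D z.fst) := rfl

lemma inner_offDiagOp (C D : H →L[ℂ] H) (z : WithLp 2 (H × H)) :
    ⟪offDiagOp C D z, z⟫ = ⟪C z.snd, z.fst⟫ + ⟪D z.fst, z.snd⟫ := by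
  rw [offDiagOp_apply, WithLp.prod_inner_apply]
  simp [WithLp.ofLp_fst, WithLp.ofLp_snd]

lemma norm_sq_pair (z : WithLp 2 (H × H)) :
    ‖z‖ ^ 2 = ‖z.fst‖ ^ 2 + ‖z.snd‖ ^ 2 := by
  rw [norm_sq_eq_re_inner (𝕜 := ℂ), WithLp.prod_inner_apply, map_add,
    ← norm_sq_eq_re_inner (𝕜 := ℂ), ← norm_sq_eq_re_inner (𝕜 := ℂ)]
  rfl

lemma numRadius_offDiag_le (C D : H →L[ℂ] H) (hDC : ‖D‖ ≤ ‖C‖) :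
    numRadius (offDiagOp C D) ≤ ‖C‖ := by
  refine numRadius_le _ (norm_nonneg _) fun z hz => ?_
  have hz2 : ‖z.fst‖ ^ 2 + ‖z.snd‖ ^ 2 = 1 := by
    rw [← norm_sq_pair, hz]; norm_num
  have h := inner_offDiagOp C D z
  calc ‖(inner ℂ (offDiagOp C D z) z : ℂ)‖
      = ‖⟪C z.snd, z.fst⟫ + ⟪D z.fst, z.snd⟫‖ := by rw [h]
    _ ≤ ‖⟪C z.snd, z.fst⟫‖ + ‖⟪D z.fst, z.snd⟫‖ := norm_add_le _ _
    _ ≤ ‖C z.snd‖ * ‖z.fst‖ + ‖D z.fst‖ * ‖z.snd‖ := by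
        gcongr <;> exact norm_inner_le_norm _ _
    _ ≤ (‖C‖ * ‖z.snd‖) * ‖z.fst‖ + (‖D‖ * ‖z.fst‖) * ‖z.snd‖ := by
        gcongr <;> exact le_opNorm _ _
    _ ≤ ‖C‖ := by nlinarith [norm_nonneg z.fst, norm_nonneg z.snd, norm_nonneg C,
        norm_nonneg D, sq_nonneg (‖z.fst‖ - ‖z.snd‖)]

lemma unit_combo (c1 c2 : ℂ) : ∃ α : ℂ, ‖α‖ = 1 ∧
    ‖α * c1 + (starRingEnd ℂ) α * c2‖ = ‖c1‖ + ‖c2‖ := by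
  set θ₁ : ℝ := (c2.arg - c1.arg) / 2 with hθ₁
  set θ₂ : ℝ := (c1.arg - c2.arg) / 2 with hθ₂
  set φ : ℝ := (c1.arg + c2.arg) / 2 with hφ
  refine ⟨Complex.exp ((θ₁ : ℂ) * Complex.I), ?_, ?_⟩
  · rw [Complex.norm_exp_ofReal_mul_I]
  · have hc : (starRingEnd ℂ) (Complex.exp ((θ₁ : ℂ) * Complex.I)) =
        Complex.exp ((θ₂ : ℂ) * Complex.I) := by
      rw [← Complex.exp_conj, map_mul, Complex.conj_ofReal, Complex.conj_I]
      congr 1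
      push_cast [hθ₁, hθ₂]
      ring
    rw [hc]
    conv_lhs => rw [← Complex.norm_mul_exp_arg_mul_I c1, ← Complex.norm_mul_exp_arg_mul_I c2]
    have e1 : Complex.exp ((θ₁ : ℂ) * Complex.I) *
        ((‖c1‖ : ℂ) * Complex.exp ((c1.arg : ℂ) * Complex.I)) =
        (‖c1‖ : ℂ) * Complex.exp ((φ : ℂ) * Complex.I) := by
      rw [mul_left_comm, ← Complex.exp_add]
      congr 2
      push_cast [hθ₁, hφ]
      ring
    have e2 : Complex.exp ((θ₂ : ℂ) * Complex.I) *
        ((‖c2‖ : ℂ) * Complex.exp ((c2.arg : ℂ) * Complex.I)) =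
        (‖c2‖ : ℂ) * Complex.exp ((φ : ℂ) * Complex.I) := by
      rw [mul_left_comm, ← Complex.exp_add]
      congr 2
      push_cast [hθ₂, hφ]
      ring
    rw [e1, e2, ← add_mul, norm_mul]
    have h3 : ‖Complex.exp ((φ : ℂ) * Complex.I)‖ = 1 := by
      rw [Complex.norm_exp_ofReal_mul_I]
    have h4 : ((‖c1‖ : ℂ) + (‖c2‖ : ℂ)) =
        ((‖c1‖ + ‖c2‖ : ℝ) : ℂ) := by push_cast; ring
    rw [h3, mul_one, h4, Complex.norm_real, Real.norm_eq_abs,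
      abs_of_nonneg (by positivity)]

lemma pair_le_numRadius (C D : H →L[ℂ] H) {x y : H} (hx : ‖x‖ = 1) (hy : ‖y‖ = 1) :
    ‖⟪C x, y⟫‖ + ‖⟪D y, x⟫‖ ≤ 2 * numRadius (offDiagOp C D) := by
  obtain ⟨α, hα, habs⟩ := unit_combo ⟪C x, y⟫ ⟪D y, x⟫
  set s : ℝ := (Real.sqrt 2)⁻¹ with hsdef
  have hs0 : 0 ≤ s := by positivity
  have hs2 : s ^ 2 = 1 / 2 := by
    rw [hsdef, inv_pow, Real.sq_sqrt (by norm_num : (0:ℝ) ≤ 2)]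
    norm_num
  set z : WithLp 2 (H × H) :=
    (WithLp.equiv 2 (H × H)).symm ((s : ℂ) • (α • y), (s : ℂ) • x) with hzdef
  have hzfst : z.fst = (s : ℂ) • (α • y) := rfl
  have hzsnd : z.snd = (s : ℂ) • x := rfl
  have hznorm : ‖z‖ = 1 := by
    have h2 : ‖z‖ ^ 2 = 1 := by
      rw [norm_sq_pair, hzfst, hzsnd]
      rw [norm_smul, norm_smul, norm_smul]
      simp only [Complex.norm_real, Real.norm_eq_abs, abs_of_nonneg hs0, hα, hx, hy]
      nlinarith [hs2]
    have := congrArg Real.sqrt h2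
    simpa [Real.sqrt_sq, norm_nonneg] using this
  have hSz : (inner ℂ (offDiagOp C D z) z : ℂ) =
      ((s ^ 2 : ℝ) : ℂ) * (α * ⟪C x, y⟫ + (starRingEnd ℂ) α * ⟪D y, x⟫) := by
    rw [inner_offDiagOp, hzfst, hzsnd]
    simp only [map_smul, inner_smul_left, inner_smul_right, Complex.conj_ofReal,
      RingHom.map_mul]
    push_cast
    ring
  have hle := le_numRadius (offDiagOp C D) hznorm
  rw [hSz, norm_mul, Complex.norm_real, Real.norm_eq_abs,
    abs_of_nonneg (by positivity), habs, hs2] at hle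
  linarith

end anyH

section completeH
variable {H : Type*} [NormedAddCommGroup H] [InnerProductSpace ℂ H] [CompleteSpace H]


lemma unitary_star_apply_apply {U : H →L[ℂ] H} (hU : U ∈ unitary (H →L[ℂ] H)) (x : H) :
    (star U) (U x) = x := by
  have h := (Unitary.mem_iff.mp hU).1
  calc (star U) (U x) = (star U * U) x := rfl
    _ = x := by rw [h]; rfl

lemma unitary_apply_star_apply {U : H →L[ℂ] H} (hU : U ∈ unitary (H →L[ℂ] H)) (x : H) :
    U ((star U) x) = x := by
  have h := (Unitary.mem_iff.mp hU).2
  calc U ((star U) x) = (U * star U) x := rfl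
    _ = x := by rw [h]; rfl

lemma unitary_inner_map {U : H →L[ℂ] H} (hU : U ∈ unitary (H →L[ℂ] H)) (u v : H) :
    ⟪U u, U v⟫ = ⟪u, v⟫ := by
  have h := ContinuousLinearMap.adjoint_inner_left U v (U u)
  rw [← ContinuousLinearMap.star_eq_adjoint, unitary_star_apply_apply hU] at h
  exact h.symm

lemma unitary_norm_apply {U : H →L[ℂ] H} (hU : U ∈ unitary (H →L[ℂ] H)) (x : H) :
    ‖U x‖ = ‖x‖ := by
  have h2 : ‖U x‖ ^ 2 = ‖x‖ ^ 2 := by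
    rw [norm_sq_eq_re_inner (𝕜 := ℂ), norm_sq_eq_re_inner (𝕜 := ℂ), unitary_inner_map hU]
  have := congrArg Real.sqrt h2
  simpa [Real.sqrt_sq, norm_nonneg] using this

lemma key_scalar {m a b : ℝ} (hm : 0 ≤ m) (ha : m ≤ a) (hb : m ≤ b) {l : ℂ} (hl : ‖l‖ = 1) :
    m * ‖1 - l‖ ≤ ‖(a : ℂ) - l * b‖ := by
  have h1 : l.re * l.re + l.im * l.im = 1 := by
    have := Complex.normSq_eq_norm_sq l
    rw [hl] at this
    simpa [Complex.normSq_apply] using this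
  have hre : l.re ≤ 1 := by
    have h := Complex.abs_re_le_norm l
    rw [hl] at h
    exact (le_abs_self l.re).trans h
  have e1 : ‖(a : ℂ) - l * b‖ ^ 2 = a ^ 2 + b ^ 2 - 2 * a * b * l.re := by
    rw [Complex.sq_norm]
    simp only [Complex.normSq_apply, Complex.sub_re, Complex.sub_im, Complex.mul_re,
      Complex.mul_im, Complex.ofReal_re, Complex.ofReal_im]
    nlinarith [h1]
  have e2 : ‖(1 : ℂ) - l‖ ^ 2 = 2 - 2 * l.re := by
    rw [Complex.sq_norm]
    simp only [Complex.normSq_apply, Complex.sub_re, Complex.sub_im, Complex.one_re,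
      Complex.one_im]
    nlinarith [h1]
  have hab : m * m ≤ a * b := mul_le_mul ha hb hm (hm.trans ha)
  have hs : (m * ‖1 - l‖) ^ 2 ≤ ‖(a : ℂ) - l * b‖ ^ 2 := by
    rw [mul_pow, e1, e2]
    nlinarith [sq_nonneg (a - b), mul_nonneg (sub_nonneg.2 hre) (sub_nonneg.2 hab)]
  calc m * ‖1 - l‖ = Real.sqrt ((m * ‖1 - l‖) ^ 2) :=
        (Real.sqrt_sq (by positivity)).symm
    _ ≤ Real.sqrt (‖(a : ℂ) - l * b‖ ^ 2) := Real.sqrt_le_sqrt hs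
    _ = _ := Real.sqrt_sq (norm_nonneg _)


lemma unitary_star_apply_apply' {U : H →L[ℂ] H} (hU : U ∈ unitary (H →L[ℂ] H)) (x : H) :
    (star U) (U x) = x := by
  have h := (Unitary.mem_iff.mp hU).1
  calc (star U) (U x) = (star U * U) x := rfl
    _ = x := by rw [h]; rfl

lemma unitary_apply_star_apply' {U : H →L[ℂ] H} (hU : U ∈ unitary (H →L[ℂ] H)) (x : H) :
    U ((star U) x) = x := by
  have h := (Unitary.mem_iff.mp hU).2
  calc U ((star U) x) = (U * star U) x := rfl
    _ = x := by rw [h]; rfl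

lemma approx_eig {W : H →L[ℂ] H} (hW : W ∈ unitary (H →L[ℂ] H)) {l : ℂ}
    (hl : l ∈ spectrum ℂ W) (hl1 : ‖l‖ = 1) {δ : ℝ} (hδ : 0 < δ) :
    ∃ x : H, ‖x‖ = 1 ∧ ‖W x - l • x‖ < δ := by
  by_contra hcon
  push_neg at hcon
  set A : H →L[ℂ] H := W - l • 1 with hAdef
  have hA_apply : ∀ y : H, A y = W y - l • y := by
    intro y; simp [hAdef, sub_apply, smul_apply, one_apply]
  have hlow : ∀ y : H, δ * ‖y‖ ≤ ‖A y‖ := by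
    intro y
    rcases eq_or_ne y 0 with rfl | hy
    · simp
    · have hny : (0:ℝ) < ‖y‖ := norm_pos_iff.mpr hy
      set x := (‖y‖⁻¹ : ℂ) • y with hxdef
      have hxn : ‖x‖ = 1 := by
        rw [hxdef, norm_smul]
        simp [norm_inv, Complex.norm_real, abs_of_nonneg hny.le]
        field_simp
      have h := hcon x hxn
      rw [hxdef] at h
      have hAx : A ((‖y‖⁻¹ : ℂ) • y) = (‖y‖⁻¹ : ℂ) • A y := map_smul _ _ _
      have hWx : W ((‖y‖⁻¹ : ℂ) • y) - l • ((‖y‖⁻¹ : ℂ) • y) = (‖y‖⁻¹ : ℂ) • (W y - l • y) := by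
        rw [map_smul, smul_comm, ← smul_sub]
      rw [hWx, norm_smul] at h
      have : ‖(‖y‖⁻¹ : ℂ)‖ = ‖y‖⁻¹ := by
        simp [Complex.norm_real, abs_of_nonneg (inv_nonneg.mpr hny.le)]
      rw [this] at h
      rw [hA_apply]
      have := mul_le_mul_of_nonneg_left h hny.le
      rw [← mul_assoc, mul_inv_cancel₀ hny.ne', one_mul] at this
      linarith [this]
  -- antilipschitz
  have hδinv : (0:ℝ) ≤ δ⁻¹ := by positivity
  have hbound : ∀ x : H, ‖x‖ ≤ δ⁻¹ * ‖A x‖ := by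
    intro x
    have h := hlow x
    calc ‖x‖ = δ⁻¹ * (δ * ‖x‖) := by field_simp
      _ ≤ δ⁻¹ * ‖A x‖ := mul_le_mul_of_nonneg_left h hδinv
  have hanti : AntilipschitzWith ⟨δ⁻¹, hδinv⟩ A := A.antilipschitz_of_bound hbound
  have hinj : Function.Injective A := hanti.injective
  have hker : A.ker = ⊥ := LinearMap.ker_eq_bot.mpr hinj
  have hclosed : IsClosed (Set.range A) := hanti.isClosed_range A.uniformContinuous
  have hconjmul : l * (starRingEnd ℂ) l = 1 := by
    rw [Complex.mul_conj, Complex.normSq_eq_norm_sq, hl1]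
    norm_num
  -- surjectivity
  have hrange : A.range = ⊤ := by
    set K : Submodule ℂ H := A.range with hK
    have hKclosed : IsClosed (K : Set H) := by
      rw [hK]
      convert hclosed using 1
      exact LinearMap.coe_range (A : H →ₗ[ℂ] H)
    haveI : CompleteSpace K := hKclosed.completeSpace_coe
    rw [← Submodule.orthogonal_eq_bot_iff]
    rw [Submodule.eq_bot_iff]
    intro u hu
    rw [Submodule.mem_orthogonal] at hu
    have hadj : star A = star W - (starRingEnd ℂ) l • 1 := by
      rw [hAdef, star_sub, star_smul, star_one, Complex.star_def]
    have hAu : (star A) u = 0 := by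
      have h2 : A ((star A) u) ∈ K := LinearMap.mem_range_self _ _
      have h3 := hu (A ((star A) u)) h2
      have h4 : ⟪(star A) u, (star A) u⟫ = ⟪u, A ((star A) u)⟫ := by
        rw [ContinuousLinearMap.star_eq_adjoint, ContinuousLinearMap.adjoint_inner_left]
      have h1 : ⟪(star A) u, (star A) u⟫ = 0 := by
        rw [h4, ← inner_conj_symm, h3, map_zero]
      exact inner_self_eq_zero.mp h1
    have hWu : (star W) u = (starRingEnd ℂ) l • u := by
      have h6 := hAu
      rw [hadj] at h6
      have h5 : (star W) u - (starRingEnd ℂ) l • u = 0 := by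
        simpa [sub_apply, smul_apply, one_apply] using h6
      exact sub_eq_zero.mp h5
    have hu2 : W u = l • u := by
      have h7 : u = (starRingEnd ℂ) l • W u := by
        conv_lhs => rw [← unitary_apply_star_apply' hW u]
        rw [hWu, map_smul]
      calc W u = (l * (starRingEnd ℂ) l) • W u := by rw [hconjmul, one_smul]
        _ = l • ((starRingEnd ℂ) l • W u) := by rw [smul_smul]
        _ = l • u := by rw [← h7]
    have hAu0 : A u = 0 := by rw [hA_apply, hu2, sub_self]
    have := hlow u
    rw [hAu0, norm_zero] at this
    have : ‖u‖ ≤ 0 := by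
      by_contra hc2
      push_neg at hc2
      nlinarith
    simpa using norm_le_zero_iff.mp this
  -- A is a unit, contradiction with l ∈ spectrum
  set e := ContinuousLinearEquiv.ofBijective A hker hrange with hedef
  have hAe : ∀ y : H, e y = A y := fun y =>
    congrFun (ContinuousLinearEquiv.coeFn_ofBijective A hker hrange) y
  have hunit : IsUnit A := by
    refine ⟨⟨A, (e.symm : H →L[ℂ] H), ?_, ?_⟩, rfl⟩
    · ext w
      simp only [ContinuousLinearMap.mul_apply, ContinuousLinearMap.one_apply,
        ContinuousLinearEquiv.coe_coe]
      rw [← hAe]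
      exact e.apply_symm_apply w
    · ext w
      simp only [ContinuousLinearMap.mul_apply, ContinuousLinearMap.one_apply,
        ContinuousLinearEquiv.coe_coe]
      rw [← hAe]
      exact e.symm_apply_apply w
  have : ¬ IsUnit ((algebraMap ℂ (H →L[ℂ] H)) l - W) := spectrum.mem_iff.mp hl
  apply this
  have hneg : (algebraMap ℂ (H →L[ℂ] H)) l - W = -A := by
    rw [hAdef, Algebra.algebraMap_eq_smul_one, neg_sub]
  rw [hneg]
  exact hunit.neg

end completeH

end helperlemmas
section maintheorem

open ContinuousLinearMap Pointwise

local notation "⟪" x ", " y "⟫" => @inner ℂ _ _ x y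

theorem stmt_12 {H : Type*} [NormedAddCommGroup H] [InnerProductSpace ℂ H] [CompleteSpace H]
    (U V X : H →L[ℂ] H)
    (hU : U ∈ unitary (H →L[ℂ] H)) (hV : V ∈ unitary (H →L[ℂ] H))
    (m : ℝ) (hm : 0 < m)
    (hX : (X - (m : ℂ) • (1 : H →L[ℂ] H)).IsPositive)
    (S : WithLp 2 (H × H) →L[ℂ] WithLp 2 (H × H))
    (hS : S = offDiagOp (U * X - X * V)
      (ContinuousLinearMap.adjoint U * X - X * ContinuousLinearMap.adjoint V)) :
    m * ‖U - V‖ ≤ numRadius S ∧ numRadius S ≤ ‖U * X - X * V‖ := by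
  subst hS
  set C : H →L[ℂ] H := U * X - X * V with hCdef
  set D : H →L[ℂ] H := ContinuousLinearMap.adjoint U * X - X * ContinuousLinearMap.adjoint V
    with hDdef
  have hUm := Unitary.mem_iff.mp hU
  have hVm := Unitary.mem_iff.mp hV
  have hUs : star U = ContinuousLinearMap.adjoint U := ContinuousLinearMap.star_eq_adjoint U
  have hVs : star V = ContinuousLinearMap.adjoint V := ContinuousLinearMap.star_eq_adjoint V
  -- X is self-adjoint
  have hXsa : IsSelfAdjoint X := by
    have h1 : IsSelfAdjoint ((m : ℂ) • (1 : H →L[ℂ] H)) := by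
      rw [IsSelfAdjoint, star_smul, star_one, Complex.star_def, Complex.conj_ofReal]
    simpa using (ContinuousLinearMap.isSelfAdjoint_iff_isSymmetric.mpr hX.1).add h1
  have hXreal : ∀ w : H, (⟪X w, w⟫ : ℂ) = ((Complex.re (⟪X w, w⟫) : ℝ) : ℂ) := by
    intro w
    have hsym : (⟪X w, w⟫ : ℂ) = ⟪w, X w⟫ := by
      conv_lhs => rw [← hXsa]
      rw [ContinuousLinearMap.star_eq_adjoint, ContinuousLinearMap.adjoint_inner_left]
    have hconj : (starRingEnd ℂ) ⟪X w, w⟫ = ⟪X w, w⟫ := by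
      rw [inner_conj_symm, ← hsym]
    exact (Complex.conj_eq_iff_re.mp hconj).symm
  have hXge : ∀ w : H, ‖w‖ = 1 → m ≤ Complex.re ⟪X w, w⟫ := by
    intro w hw
    have h2 := hX.2 w
    rw [ContinuousLinearMap.reApplyInnerSelf_apply] at h2
    have h3 : (X - (m : ℂ) • (1 : H →L[ℂ] H)) w = X w - (m : ℂ) • w := by
      simp [ContinuousLinearMap.sub_apply, ContinuousLinearMap.smul_apply,
        ContinuousLinearMap.one_apply]
    have h4 : (⟪w, w⟫ : ℂ) = 1 := by
      rw [inner_self_eq_norm_sq_to_K, hw]; norm_num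
    rw [h3, inner_sub_left, inner_smul_left, h4, mul_one, Complex.conj_ofReal] at h2
    simp only [map_sub, RCLike.re_to_complex, Complex.ofReal_re] at h2
    linarith
  -- upper bound
  have hDC : ‖D‖ ≤ ‖C‖ := by
    refine opNorm_le_bound _ (norm_nonneg _) fun w => ?_
    have hpt : D w = -((star U) (C ((star V) w))) := by
      rw [hCdef, hDdef, hUs, hVs]
      simp only [ContinuousLinearMap.sub_apply, ContinuousLinearMap.mul_apply, map_sub]
      rw [← hUs, ← hVs, unitary_star_apply_apply' hU, unitary_apply_star_apply' hV]
      rw [hUs, hVs]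
      abel
    rw [hpt, norm_neg]
    rw [unitary_norm_apply (Unitary.star_mem hU)]
    calc ‖C ((star V) w)‖ ≤ ‖C‖ * ‖(star V) w‖ := le_opNorm _ _
      _ = ‖C‖ * ‖w‖ := by rw [unitary_norm_apply (Unitary.star_mem hV)]
  have hupper : numRadius (offDiagOp C D) ≤ ‖C‖ := numRadius_offDiag_le C D hDC
  refine ⟨?_, hupper⟩
  -- lower bound
  rcases subsingleton_or_nontrivial H with hsub | hnt
  · have hUV0 : U - V = 0 := by
      ext w
      exact Subsingleton.elim _ _
    rw [hUV0, norm_zero, mul_zero]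
    exact numRadius_nonneg _
  · -- W and the norm identity
    set W : H →L[ℂ] H := star U * V with hWdef
    have hWu : W ∈ unitary (H →L[ℂ] H) := mul_mem (Unitary.star_mem hU) hV
    have hWmul : U * W = V := by
      rw [hWdef, ← mul_assoc, hUm.2, one_mul]
    have hUV : ‖U - V‖ = ‖1 - W‖ := by
      have hpt : ∀ w : H, (U - V) w = U ((1 - W) w) := by
        intro w
        have : (U * (1 - W)) w = U ((1 - W) w) := rfl
        rw [← this, mul_sub, mul_one, hWmul]
      refine le_antisymm (opNorm_le_bound _ (norm_nonneg _) fun w => ?_)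
        (opNorm_le_bound _ (norm_nonneg _) fun w => ?_)
      · rw [hpt w, unitary_norm_apply hU]
        exact le_opNorm _ _
      · have : ‖(1 - W) w‖ = ‖(U - V) w‖ := by
          rw [hpt w, unitary_norm_apply hU]
        rw [this]
        exact le_opNorm _ _
    rw [hUV]
    rcases le_or_gt ‖1 - W‖ 0 with h0 | h0
    · have : m * ‖1 - W‖ ≤ 0 := mul_nonpos_iff.mpr (Or.inl ⟨hm.le, h0⟩)
      exact this.trans (numRadius_nonneg _)
    · refine le_of_forall_pos_le_add fun ε hε => ?_
      haveI : Nontrivial (H →L[ℂ] H) := by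
        obtain ⟨u, hu⟩ := exists_ne (0 : H)
        refine ⟨0, 1, fun h => hu ?_⟩
        have := congrFun (congrArg DFunLike.coe h.symm) u
        simpa using this
      haveI : IsStarNormal (1 - W) := by
        constructor
        rw [star_sub, star_one]
        have h1 : star W * W = 1 := (Unitary.mem_iff.mp hWu).1
        have h2 : W * star W = 1 := (Unitary.mem_iff.mp hWu).2
        rw [Commute, SemiconjBy]
        rw [sub_mul, sub_mul, one_mul, one_mul, mul_sub, mul_sub, mul_one, mul_one, h1, h2]
        abel
      obtain ⟨l', hl'mem, hl'⟩ :=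
        spectrum.exists_nnnorm_eq_spectralRadius_of_nonempty
          (spectrum.nonempty (1 - W))
      have hrad : spectralRadius ℂ (1 - W) = (‖1 - W‖₊ : ENNReal) :=
        IsStarNormal.spectralRadius_eq_nnnorm (1 - W)
      have hl'norm : ‖l'‖ = ‖1 - W‖ := by
        rw [hrad] at hl'
        have h9 := ENNReal.coe_inj.mp hl'
        have h10 := congrArg NNReal.toReal h9
        simpa [coe_nnnorm] using h10
      have hmem : l' ∈ ({(1 : ℂ)} : Set ℂ) - spectrum ℂ W := by
        rw [spectrum.singleton_sub_eq]
        simpa using hl'mem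
      obtain ⟨one', h1', lam, hlam, hsub⟩ := Set.mem_sub.mp hmem
      rw [Set.mem_singleton_iff] at h1'
      subst h1'
      have hlam1 : ‖lam‖ = 1 := by
        have := spectrum.subset_circle_of_unitary hWu hlam
        simpa [Metric.mem_sphere, dist_zero_right] using this
      have hlamnorm : ‖(1 : ℂ) - lam‖ = ‖1 - W‖ := by rw [hsub, hl'norm]
      set δ : ℝ := ε / (‖X‖ + 1) with hδdef
      have hδpos : 0 < δ := by positivity
      obtain ⟨x, hx1, hxδ⟩ := approx_eig hWu hlam hlam1 hδpos
      -- main computation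
      have hUx1 : ‖U x‖ = 1 := by rw [unitary_norm_apply hU, hx1]
      set A : ℝ := (⟪X x, x⟫ : ℂ).re with hAdef
      set B : ℝ := (⟪X (U x), U x⟫ : ℂ).re with hBdef
      have hmA : m ≤ A := hXge x hx1
      have hmB : m ≤ B := hXge (U x) hUx1
      have hAre : (⟪X x, x⟫ : ℂ) = (A : ℂ) := hXreal x
      have hBre : (⟪X (U x), U x⟫ : ℂ) = (B : ℂ) := hXreal (U x)
      set r : H := W x - lam • x with hrdef
      have hrnorm : ‖r‖ < δ := hxδ
      have hVx : V x = U (W x) := by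
        have h11 : (U * W) x = U (W x) := rfl
        rw [← h11, hWmul]
      have hWx : W x = lam • x + r := by rw [hrdef]; abel
      have hc1 : (⟪C x, U x⟫ : ℂ) = ((A : ℂ) - (starRingEnd ℂ) lam * B) - ⟪X (U r), U x⟫ := by
        rw [hCdef]
        simp only [ContinuousLinearMap.sub_apply, ContinuousLinearMap.mul_apply]
        rw [inner_sub_left]
        have t1 : (⟪U (X x), U x⟫ : ℂ) = (A : ℂ) := by
          rw [unitary_inner_map hU, hAre]
        have t2 : (⟪X (V x), U x⟫ : ℂ) = (starRingEnd ℂ) lam * B + ⟪X (U r), U x⟫ := by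
          rw [hVx, hWx]
          simp only [map_add, map_smul]
          rw [inner_add_left, inner_smul_left, hBre]
        rw [t1, t2]
        ring
      have hc1e : ‖(⟪X (U r), U x⟫ : ℂ)‖ ≤ ‖X‖ * δ := by
        calc ‖(⟪X (U r), U x⟫ : ℂ)‖ ≤ ‖X (U r)‖ * ‖U x‖ := norm_inner_le_norm _ _
          _ = ‖X (U r)‖ := by rw [hUx1, mul_one]
          _ ≤ ‖X‖ * ‖U r‖ := le_opNorm _ _
          _ = ‖X‖ * ‖r‖ := by rw [unitary_norm_apply hU]
          _ ≤ ‖X‖ * δ := mul_le_mul_of_nonneg_left hrnorm.le (norm_nonneg X)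
      have hkey1 : m * ‖(1:ℂ) - lam‖ ≤ ‖(A : ℂ) - (starRingEnd ℂ) lam * (B : ℂ)‖ := by
        have hcl : ‖(starRingEnd ℂ) lam‖ = 1 := by rw [RCLike.norm_conj, hlam1]
        have h := key_scalar hm.le hmA hmB hcl
        have h2 : ‖(1 : ℂ) - (starRingEnd ℂ) lam‖ = ‖(1:ℂ) - lam‖ := by
          calc ‖(1 : ℂ) - (starRingEnd ℂ) lam‖ = ‖(starRingEnd ℂ) ((1:ℂ) - lam)‖ := by
                rw [map_sub, map_one]
            _ = ‖(1:ℂ) - lam‖ := RCLike.norm_conj _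
        rw [h2] at h
        exact h
      have hlow1 : m * ‖(1:ℂ) - lam‖ - ‖X‖ * δ ≤ ‖(⟪C x, U x⟫ : ℂ)‖ := by
        rw [hc1]
        calc m * ‖(1:ℂ) - lam‖ - ‖X‖ * δ
            ≤ ‖(A : ℂ) - (starRingEnd ℂ) lam * (B : ℂ)‖ - ‖(⟪X (U r), U x⟫ : ℂ)‖ :=
              sub_le_sub hkey1 hc1e
          _ ≤ ‖((A : ℂ) - (starRingEnd ℂ) lam * B) - ⟪X (U r), U x⟫‖ := norm_sub_norm_le _ _
      have hsW : ContinuousLinearMap.adjoint V (U x) = (star W) x := by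
        rw [hWdef, star_mul, star_star, ← hVs]
        rfl
      have hconjmul : (starRingEnd ℂ) lam * lam = 1 := by
        rw [mul_comm, Complex.mul_conj, Complex.normSq_eq_norm_sq, hlam1]
        norm_num
      set s2 : H := (star W) x - (starRingEnd ℂ) lam • x with hs2def
      have hs2norm : ‖s2‖ < δ := by
        have hid : s2 = (star W) (x - (starRingEnd ℂ) lam • W x) := by
          rw [hs2def, map_sub, map_smul, unitary_star_apply_apply' hWu]
        have hid2 : x - (starRingEnd ℂ) lam • W x = (-(starRingEnd ℂ) lam) • r := by
          rw [hrdef, neg_smul, smul_sub, smul_smul, hconjmul, one_smul, neg_sub]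
        rw [hid, hid2, unitary_norm_apply (Unitary.star_mem hWu), norm_smul, norm_neg,
          RCLike.norm_conj, hlam1, one_mul]
        exact hrnorm
      have hc2 : (⟪D (U x), x⟫ : ℂ) = ((B : ℂ) - lam * A) - ⟪X s2, x⟫ := by
        rw [hDdef]
        simp only [ContinuousLinearMap.sub_apply, ContinuousLinearMap.mul_apply]
        rw [inner_sub_left]
        have t3 : (⟪ContinuousLinearMap.adjoint U (X (U x)), x⟫ : ℂ) = (B : ℂ) := by
          rw [ContinuousLinearMap.adjoint_inner_left, hBre]
        have t4 : (⟪X (ContinuousLinearMap.adjoint V (U x)), x⟫ : ℂ) = lam * A + ⟪X s2, x⟫ := by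
          rw [hsW]
          have h12 : (star W) x = (starRingEnd ℂ) lam • x + s2 := by rw [hs2def]; abel
          rw [h12]
          simp only [map_add, map_smul]
          rw [inner_add_left, inner_smul_left, Complex.conj_conj, hAre]
        rw [t3, t4]
        ring
      have hc2e : ‖(⟪X s2, x⟫ : ℂ)‖ ≤ ‖X‖ * δ := by
        calc ‖(⟪X s2, x⟫ : ℂ)‖ ≤ ‖X s2‖ * ‖x‖ := norm_inner_le_norm _ _
          _ = ‖X s2‖ := by rw [hx1, mul_one]
          _ ≤ ‖X‖ * ‖s2‖ := le_opNorm _ _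
          _ ≤ ‖X‖ * δ := mul_le_mul_of_nonneg_left hs2norm.le (norm_nonneg X)
      have hkey2 : m * ‖(1:ℂ) - lam‖ ≤ ‖(B : ℂ) - lam * (A : ℂ)‖ :=
        key_scalar hm.le hmB hmA hlam1
      have hlow2 : m * ‖(1:ℂ) - lam‖ - ‖X‖ * δ ≤ ‖(⟪D (U x), x⟫ : ℂ)‖ := by
        rw [hc2]
        calc m * ‖(1:ℂ) - lam‖ - ‖X‖ * δ
            ≤ ‖(B : ℂ) - lam * (A : ℂ)‖ - ‖(⟪X s2, x⟫ : ℂ)‖ := sub_le_sub hkey2 hc2e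
          _ ≤ ‖((B : ℂ) - lam * A) - ⟪X s2, x⟫‖ := norm_sub_norm_le _ _
      have hpair := pair_le_numRadius C D hx1 hUx1
      have hXδ : ‖X‖ * δ ≤ ε := by
        rw [hδdef]
        rw [div_eq_inv_mul, ← mul_assoc]
        have h13 : ‖X‖ * (‖X‖ + 1)⁻¹ ≤ 1 := by
          rw [← div_eq_mul_inv, div_le_one (by positivity)]
          linarith [norm_nonneg X]
        calc ‖X‖ * (‖X‖ + 1)⁻¹ * ε ≤ 1 * ε := mul_le_mul_of_nonneg_right h13 hε.le
          _ = ε := one_mul ε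
      rw [← hlamnorm]
      linarith [hlow1, hlow2, hpair, hXδ]


end maintheorem
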